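/- Let $0 < M < 2/(3\sqrt{3})$ and let $r_c$ be the largest positive root of $r^3 - r + M$, with $z_c = 1/r_c$ and $z_\odot = 2/(3M)$. Then $z_\odot > z_c$. -/
import Mathlib


/-- The critical point `z⊙ = 2/(3M)` of `F` lies beyond `z_c = 1/r_c`. -/
theorem zodot_gt_zc (M rc : ℝ) (hM0 : 0 < M) (hM : M < 2 / (3 * Real.sqrt 3))
    (hrc : 0 < rc) (hroot : rc ^ 3 - rc + M = 0)
    (hmax : ∀ r : ℝ, 0 < r → r ^ 3 - r + M = 0 → r ≤ rc) :
    1 / rc < 2 / (3 * M) := by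
  have hs : (0:ℝ) < Real.sqrt 3 := Real.sqrt_pos.mpr (by norm_num)
  have h3 : Real.sqrt 3 ^ 2 = 3 := Real.sq_sqrt (by norm_num)
  set a : ℝ := 1 / Real.sqrt 3 with ha
  have ha0 : 0 < a := by positivity
  have hab : a ≤ 1 := by
    rw [ha, div_le_one hs]
    nlinarith
  have hfa : a ^ 3 - a + M < 0 := by
    have h2 : M < 2 / (3 * Real.sqrt 3) := hM
    have key : a ^ 3 - a = -(2 / (3 * Real.sqrt 3)) := by
      rw [ha]
      field_simp
      nlinarith [h3, hs]
    rw [key]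
    linarith
  have hf1 : (0:ℝ) ≤ 1 ^ 3 - 1 + M := by linarith
  -- IVT on [a, 1]
  have hcont : ContinuousOn (fun r : ℝ => r ^ 3 - r + M) (Set.Icc a 1) :=
    (Continuous.continuousOn (by continuity))
  have hsub := intermediate_value_Icc hab hcont
  have h0mem : (0:ℝ) ∈ Set.Icc ((fun r : ℝ => r ^ 3 - r + M) a)
      ((fun r : ℝ => r ^ 3 - r + M) 1) := by
    constructor <;> simp <;> linarith
  obtain ⟨x, hxmem, hxroot⟩ := hsub h0mem
  have hx0 : 0 < x := lt_of_lt_of_le ha0 hxmem.1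
  have hxrc : x ≤ rc := hmax x hx0 hxroot
  have hxa : a < x := by
    rcases lt_or_eq_of_le hxmem.1 with h | h
    · exact h
    · exfalso; rw [← h] at hxroot; simp only at hxroot; linarith
  have hrca : a < rc := lt_of_lt_of_le hxa hxrc
  have hrsq : 1 / 3 < rc ^ 2 := by
    have : a ^ 2 < rc ^ 2 := by nlinarith
    have ha2 : a ^ 2 = 1 / 3 := by
      rw [ha, div_pow, one_pow, h3]
    linarith [ha2 ▸ this]
  rw [div_lt_div_iff₀ hrc (by positivity)]
  nlinarith [hroot, hrsq, hrc]
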